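/- For every graph G, M(G) ≤ T⁺(G). -/

import Mathlib

open SimpleGraph

/-- The set `W` induces a path in `G`. -/
def InducesPath {V : Type*} (G : SimpleGraph V) (W : Set V) : Prop :=
  ∃ n : ℕ, Nonempty ((G.induce W) ≃g SimpleGraph.pathGraph n)

/-- The set `U` is covered by `p` vertex-disjoint induced paths of `G`. -/
def IsPathCoverOn {V : Type*} (G : SimpleGraph V) (U : Set V) (p : ℕ) : Prop :=
  ∃ parts : Fin p → Set V,
    (∀ i, (parts i).Nonempty) ∧
    (Pairwise fun i j => Disjoint (parts i) (parts j)) ∧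
    (⋃ i, parts i) = U ∧
    ∀ i, InducesPath G (parts i)

/-- The induced subgraph of `G` on `U` is a vertex-disjoint union of `p` paths. -/
def IsDisjointPathsOn {V : Type*} (G : SimpleGraph V) (U : Set V) (p : ℕ) : Prop :=
  ∃ parts : Fin p → Set V,
    (∀ i, (parts i).Nonempty) ∧
    (Pairwise fun i j => Disjoint (parts i) (parts j)) ∧
    (⋃ i, parts i) = U ∧
    (∀ i, InducesPath G (parts i)) ∧
    (∀ i j, i ≠ j → ∀ u ∈ parts i, ∀ v ∈ parts j, ¬ G.Adj u v)

/-- The path cover number `P(G)`. -/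
noncomputable def pathCoverNumber {V : Type*} (G : SimpleGraph V) : ℕ :=
  sInf {p | IsPathCoverOn G Set.univ p}

/-- `Δ(G)`: max of `p - q` over deletions of `q` vertices leaving `p` disjoint paths. -/
noncomputable def deltaLow {V : Type*} [Fintype V] (G : SimpleGraph V) : ℤ :=
  sSup {d : ℤ | ∃ (S : Finset V) (p : ℕ),
    IsDisjointPathsOn G ((↑S : Set V)ᶜ) p ∧ d = (p : ℤ) - S.card}

/-- `Δ⁺(G)`: min of `p + q` over deletions of `q` vertices leaving `p` disjoint paths. -/
noncomputable def deltaPlus {V : Type*} [Fintype V] (G : SimpleGraph V) : ℕ :=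
  sInf {k | ∃ (S : Finset V) (p : ℕ),
    IsDisjointPathsOn G ((↑S : Set V)ᶜ) p ∧ k = p + S.card}

/-- `T⁻(G)`. -/
noncomputable def Tminus {V : Type*} [Fintype V] (G : SimpleGraph V) : ℤ :=
  sSup {d : ℤ | ∃ S : Finset V, (G.induce ((↑S : Set V)ᶜ)).IsAcyclic ∧
    d = (pathCoverNumber (G.induce ((↑S : Set V)ᶜ)) : ℤ) - S.card}

/-- `T⁺(G)`. -/
noncomputable def Tplus {V : Type*} [Fintype V] (G : SimpleGraph V) : ℕ :=
  sInf {k | ∃ S : Finset V, (G.induce ((↑S : Set V)ᶜ)).IsAcyclic ∧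
    k = pathCoverNumber (G.induce ((↑S : Set V)ᶜ)) + S.card}

/-- `A` is a symmetric real matrix whose graph is `G`, i.e. `A ∈ S(G)`. -/
def MatchesGraph {V : Type*} [Fintype V] (G : SimpleGraph V) (A : Matrix V V ℝ) : Prop :=
  A.IsSymm ∧ ∀ i j : V, i ≠ j → (A i j ≠ 0 ↔ G.Adj i j)

/-- The nullity of a square real matrix. -/
noncomputable def matNullity {V : Type*} [Fintype V] (A : Matrix V V ℝ) : ℕ :=
  Module.finrank ℝ (LinearMap.ker A.mulVecLin)

/-- `M(G)`: the maximum nullity (= maximum eigenvalue multiplicity). -/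
noncomputable def maxNullity {V : Type*} [Fintype V] [DecidableEq V] (G : SimpleGraph V) : ℕ :=
  sSup {k | ∃ A : Matrix V V ℝ, MatchesGraph G A ∧ matNullity A = k}

/-- `mr(G)`: the minimum rank. -/
noncomputable def minRank {V : Type*} [Fintype V] [DecidableEq V] (G : SimpleGraph V) : ℕ :=
  sInf {k | ∃ A : Matrix V V ℝ, MatchesGraph G A ∧ A.rank = k}

/-- Vertices colored by the zero forcing process started from `B`. -/
inductive ZFClosed {V : Type*} (G : SimpleGraph V) (B : Set V) : V → Prop
  | init (v : V) (h : v ∈ B) : ZFClosed G B v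
  | force (u v : V) (hu : ZFClosed G B u) (huv : G.Adj u v)
      (hforce : ∀ w, G.Adj u w → w ≠ v → ZFClosed G B w) : ZFClosed G B v

/-- `B` is a zero forcing set of `G`. -/
def IsZeroForcingSet {V : Type*} (G : SimpleGraph V) (B : Set V) : Prop :=
  ∀ v, ZFClosed G B v

/-- `Z(G)`: the zero forcing number. -/
noncomputable def zeroForcingNumber {V : Type*} [Fintype V] (G : SimpleGraph V) : ℕ :=
  sInf {k | ∃ B : Finset V, IsZeroForcingSet G ↑B ∧ B.card = k}

/-- The star graph on `Fin n`: vertex `0` adjacent to all others. -/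
def starGraph (n : ℕ) : SimpleGraph (Fin n) :=
  SimpleGraph.fromRel (fun i _ => i.val = 0)

/-- The wheel graph: a hub (`none`) joined to every vertex of a cycle on `Fin m`. -/
def wheelGraph (m : ℕ) : SimpleGraph (Option (Fin m)) :=
  SimpleGraph.fromRel (fun u v =>
    match u, v with
    | none, some _ => True
    | some i, some j => j.val = (i.val + 1) % m
    | _, _ => False)

/-- The `n`-sun: a cycle on `Fin n` (the `inl` vertices) with a pendant vertex
(`inr i`) attached to each cycle vertex (`inl i`). -/
def sunGraph (n : ℕ) : SimpleGraph (Fin n ⊕ Fin n) :=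
  SimpleGraph.fromRel (fun u v =>
    match u, v with
    | .inl i, .inl j => j.val = (i.val + 1) % n
    | .inl i, .inr j => i = j
    | _, _ => False)

lemma key_vanish {V : Type*} [Fintype V] {G : SimpleGraph V} {A : Matrix V V ℝ}
    (hA : MatchesGraph G A) {B : Set V} (hB : IsZeroForcingSet G B)
    {x : V → ℝ} (hx : A.mulVec x = 0) (hxB : ∀ b ∈ B, x b = 0) : x = 0 := by
  funext v
  show x v = 0
  induction hB v with
  | init v hv => exact hxB v hv
  | force u v hu huv hforce ihu ihf =>
    have h0 : A.mulVec x u = 0 := congrFun hx u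
    have hsum : ∑ j, A u j * x j = 0 := by
      simpa [Matrix.mulVec, dotProduct] using h0
    have hne : u ≠ v := G.ne_of_adj huv
    have hAuv : A u v ≠ 0 := (hA.2 u v hne).2 huv
    have hz : ∀ w ∈ Finset.univ, w ≠ v → A u w * x w = 0 := by
      intro w _ hwv
      by_cases hwu : w = u
      · subst hwu; rw [ihu, mul_zero]
      · by_cases hadj : G.Adj u w
        · rw [ihf w hadj hwv, mul_zero]
        · have : A u w = 0 := by
            by_contra h
            exact hadj ((hA.2 u w (Ne.symm hwu)).1 h)
          rw [this, zero_mul]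
    have := Finset.sum_eq_single v hz (by simp)
    rw [hsum] at this
    exact (mul_eq_zero.1 this.symm).resolve_left hAuv

lemma nullity_le_card_zfs {V : Type*} [Fintype V] [DecidableEq V] {G : SimpleGraph V}
    {A : Matrix V V ℝ} (hA : MatchesGraph G A) (B : Finset V)
    (hB : IsZeroForcingSet G ↑B) : matNullity A ≤ B.card := by
  classical
  set K := LinearMap.ker A.mulVecLin
  let f : K →ₗ[ℝ] (↥B → ℝ) :=
    (LinearMap.funLeft ℝ ℝ (fun b : ↥B => (b : V))).comp K.subtype
  have hinj : Function.Injective f := by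
    rw [← LinearMap.ker_eq_bot]
    ext ⟨x, hx⟩
    simp only [LinearMap.mem_ker, Submodule.mem_bot]
    constructor
    · intro h
      have hx' : A.mulVec x = 0 := by
        simpa [Matrix.mulVecLin_apply] using (LinearMap.mem_ker.1 hx)
      have hxB : ∀ b ∈ (↑B : Set V), x b = 0 := by
        intro b hb
        exact congrFun h ⟨b, hb⟩
      have := key_vanish hA hB hx' hxB
      exact Subtype.ext this
    · intro h; rw [h]; exact map_zero f
  calc matNullity A ≤ Module.finrank ℝ (↥B → ℝ) :=
        LinearMap.finrank_le_finrank_of_injective hinj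
    _ = B.card := by simp [Module.finrank_fintype_fun_eq_card]

lemma zfs_lift {V : Type*} (G : SimpleGraph V) (s : Set V) (B : Set ↥s)
    (h : IsZeroForcingSet (G.induce s) B) :
    IsZeroForcingSet G (Subtype.val '' B ∪ sᶜ) := by
  have key : ∀ (u : ↥s), ZFClosed (G.induce s) B u →
      ZFClosed G (Subtype.val '' B ∪ sᶜ) u.val := by
    intro u hu
    induction hu with
    | init w hw => exact ZFClosed.init _ (Or.inl ⟨w, hw, rfl⟩)
    | force u w hu huw hforce ihu ihf =>
      refine ZFClosed.force u.val w.val ihu huw ?_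
      intro w' hw' hne
      by_cases hw's : w' ∈ s
      · exact ihf ⟨w', hw's⟩ hw' (by simpa [Subtype.ext_iff] using hne)
      · exact ZFClosed.init _ (Or.inr hw's)
  intro v
  by_cases hv : v ∈ s
  · exact key ⟨v, hv⟩ (h ⟨v, hv⟩)
  · exact ZFClosed.init _ (Or.inr hv)


lemma forest_cover_zfs {W : Type*} [Fintype W] (H : SimpleGraph W) (hac : H.IsAcyclic)
    {p : ℕ} (hcov : IsPathCoverOn H Set.univ p) :
    ∃ B : Finset W, IsZeroForcingSet H ↑B ∧ B.card ≤ p := by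
  classical
  obtain ⟨parts, hne, hdisj, huniv, hpath⟩ := hcov
  choose n hiso using hpath
  let φ : ∀ i, H.induce (parts i) ≃g pathGraph (n i) := fun i => (hiso i).some
  let q : ∀ i, Fin (n i) → W := fun i k => ((φ i).symm k : W)
  have hqmem : ∀ i k, q i k ∈ parts i := fun i k => ((φ i).symm k).2
  have hq_adj : ∀ i (a b : Fin (n i)),
      H.Adj (q i a) (q i b) ↔ (pathGraph (n i)).Adj a b := by
    intro i a b
    exact (φ i).symm.map_rel_iff
  have hq_surj : ∀ i w, w ∈ parts i → ∃ k, q i k = w := by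
    intro i w hw
    refine ⟨φ i ⟨w, hw⟩, ?_⟩
    simp only [q, RelIso.symm_apply_apply]
  have npos : ∀ i, 0 < n i := by
    intro i
    obtain ⟨w, hw⟩ := hne i
    exact (φ i ⟨w, hw⟩).pos
  set B : Finset W := Finset.image (fun i : Fin p => q i ⟨0, npos i⟩) Finset.univ with hB
  refine ⟨B, ?_, le_trans Finset.card_image_le (by simp)⟩
  intro v₀
  by_contra hv₀
  set C : Set W := {v | ZFClosed H ↑B v} with hC
  -- initial vertices are colored
  have h0C : ∀ i, q i ⟨0, npos i⟩ ∈ C := by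
    intro i
    exact ZFClosed.init _ (by simp [hB])
  -- the incomplete paths
  let D := {i : Fin p // ∃ kk : Fin (n i), q i kk ∉ C}
  have hD0 : ∃ i₀ : D, True := by
    have : v₀ ∈ ⋃ i, parts i := by rw [huniv]; trivial
    obtain ⟨i, hi⟩ := Set.mem_iUnion.1 this
    obtain ⟨k, hk⟩ := hq_surj i v₀ hi
    exact ⟨⟨i, ⟨k, by rw [hk]; exact hv₀⟩⟩, trivial⟩
  obtain ⟨i₀, -⟩ := hD0
  -- minimal uncolored index on each incomplete path
  have hFne : ∀ i : D, (Finset.univ.filter fun kk => q i.1 kk ∉ C).Nonempty := by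
    rintro ⟨i, ⟨kk, hkk⟩⟩
    exact ⟨kk, by simp [hkk]⟩
  let k : ∀ i : D, Fin (n i.1) := fun i => (Finset.univ.filter fun kk => q i.1 kk ∉ C).min' (hFne i)
  have hkU : ∀ i : D, q i.1 (k i) ∉ C := by
    intro i
    have := Finset.min'_mem _ (hFne i)
    simpa using (Finset.mem_filter.1 this).2
  have hkmin : ∀ (i : D) (a : Fin (n i.1)), a < k i → q i.1 a ∈ C := by
    intro i a ha
    by_contra hcon
    have : k i ≤ a := Finset.min'_le _ _ (by simp [hcon])
    exact absurd ha (not_lt.2 this)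
  have hk0 : ∀ i : D, 0 < (k i).val := by
    intro i
    rcases Nat.eq_zero_or_pos (k i).val with h | h
    · exfalso
      have : k i = ⟨0, npos i.1⟩ := Fin.ext h
      exact hkU i (this ▸ h0C i.1)
    · exact h
  let zidx : ∀ i : D, Fin (n i.1) := fun i => ⟨(k i).val - 1, by have := (k i).isLt; omega⟩
  let z : D → W := fun i => q i.1 (zidx i)
  have hzC : ∀ i : D, z i ∈ C := by
    intro i
    exact hkmin i (zidx i) (Fin.lt_def.mpr (Nat.sub_lt (hk0 i) one_pos))
  have hzadj : ∀ i : D, H.Adj (z i) (q i.1 (k i)) := by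
    intro i
    rw [hq_adj]
    rw [pathGraph_adj]
    left
    exact Nat.succ_pred_eq_of_pos (hk0 i)
  -- find the blocking neighbor
  have hcex : ∀ i : D, ∃ c, H.Adj (z i) c ∧ c ≠ q i.1 (k i) ∧ c ∉ C := by
    intro i
    by_contra hcon
    push_neg at hcon
    have : ZFClosed H ↑B (q i.1 (k i)) := by
      refine ZFClosed.force (z i) _ (hzC i) (hzadj i) ?_
      intro w hw hwne
      exact hcon w hw hwne
    exact hkU i this
  choose c hcadj hcne hcC using hcex
  -- the blocking neighbor is in another part
  have hcnotin : ∀ i : D, c i ∉ parts i.1 := by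
    intro i hin
    obtain ⟨kk, hkk⟩ := hq_surj i.1 (c i) hin
    have hadj : (pathGraph (n i.1)).Adj (zidx i) kk := by
      rw [← hq_adj]
      rw [hkk]
      exact hcadj i
    rw [pathGraph_adj] at hadj
    rcases hadj with h | h
    · -- kk = k i
      have : kk = k i := by
        apply Fin.ext
        simp only [zidx] at h
        have := hk0 i
        omega
      exact hcne i (by rw [← hkk, this])
    · -- kk < zidx < k i : colored
      have : kk < k i := by
        rw [Fin.lt_def]
        simp only [zidx] at h
        have := hk0 i
        omega
      exact hcC i (by rw [← hkk]; exact hkmin i kk this)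
  have hg : ∀ i : D, ∃ j : D, j.1 ≠ i.1 ∧ c i ∈ parts j.1 := by
    intro i
    have : c i ∈ ⋃ j, parts j := by rw [huniv]; trivial
    obtain ⟨j, hj⟩ := Set.mem_iUnion.1 this
    have hjD : ∃ kk : Fin (n j), q j kk ∉ C := by
      obtain ⟨kk, hkk⟩ := hq_surj j (c i) hj
      exact ⟨kk, by rw [hkk]; exact hcC i⟩
    refine ⟨⟨j, hjD⟩, ?_, hj⟩
    intro hji
    exact hcnotin i (hji ▸ hj)
  choose g hgne hcmem using hg
  -- find a periodic point
  obtain ⟨a, b, hab, heq⟩ := Finite.exists_ne_map_eq_of_infinite (fun t : ℕ => g^[t] i₀)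
  have hper : ∃ a b : ℕ, a < b ∧ g^[a] i₀ = g^[b] i₀ := by
    rcases hab.lt_or_gt with h | h
    · exact ⟨a, b, h, heq⟩
    · exact ⟨b, a, h, heq.symm⟩
  obtain ⟨a', b', hlt, heq'⟩ := hper
  set i₁ : D := g^[a'] i₀ with hi₁
  have hper1 : 0 < b' - a' ∧ g^[b' - a'] i₁ = i₁ := by
    constructor
    · omega
    · rw [hi₁, ← Function.iterate_add_apply]
      have : b' - a' + a' = b' := by omega
      rw [this, ← heq']
  have hexm : ∃ mm : ℕ, 0 < mm ∧ g^[mm] i₁ = i₁ := ⟨b' - a', hper1⟩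
  set m : ℕ := Nat.find hexm with hm
  have hmspec : 0 < m ∧ g^[m] i₁ = i₁ := Nat.find_spec hexm
  have hmmin : ∀ t, 0 < t → t < m → g^[t] i₁ ≠ i₁ := by
    intro t ht htm hcon
    exact Nat.find_min hexm htm ⟨ht, hcon⟩
  -- segments within one part
  have seg : ∀ (jj : Fin p) (x y : W), x ∈ parts jj → y ∈ parts jj →
      ∃ Wk : H.Walk x y, ∀ e ∈ Wk.edges, ∀ u ∈ e, u ∈ parts jj := by
    intro jj x y hx hy
    have hreach : (H.induce (parts jj)).Reachable ⟨x, hx⟩ ⟨y, hy⟩ := by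
      have h1 : (pathGraph (n jj)).Reachable (φ jj ⟨x, hx⟩) (φ jj ⟨y, hy⟩) :=
        pathGraph_preconnected (n jj) _ _
      have h2 := h1.map (φ jj).symm.toHom
      simpa using h2
    obtain ⟨Wk'⟩ := hreach
    let incl : H.induce (parts jj) →g H := ⟨Subtype.val, fun {a b} h => h⟩
    refine ⟨Wk'.map incl, ?_⟩
    intro e he u hu
    rw [Walk.edges_map, List.mem_map] at he
    obtain ⟨e', _, rfl⟩ := he
    rw [Sym2.mem_map] at hu
    obtain ⟨u', _, rfl⟩ := hu
    exact u'.2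
  have hzmem : ∀ i : D, z i ∈ parts i.1 := fun i => hqmem i.1 (zidx i)
  have hdisj' : ∀ {i j : Fin p}, i ≠ j → ∀ {x : W}, x ∈ parts i → x ∈ parts j → False := by
    intro i j hij x hx hy
    exact Set.disjoint_left.mp (hdisj hij) hx hy
  have hmpos := hmspec.1
  have hchain : ∀ d : ℕ, d ≤ m - 1 →
      ∃ Wk : H.Walk (c (g^[m - 1 - d] i₁)) (z i₁), s(z i₁, c i₁) ∉ Wk.edges := by
    intro d
    induction d with
    | zero =>
      intro _
      have hmm : g (g^[m - 1] i₁) = i₁ := by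
        have h2 : g^[(m - 1) + 1] i₁ = g (g^[m - 1] i₁) :=
          Function.iterate_succ_apply' g (m - 1) i₁
        rw [← h2]
        have h1 : m - 1 + 1 = m := by omega
        rw [h1]; exact hmspec.2
      have hc1 : c (g^[m - 1] i₁) ∈ parts i₁.1 := by
        have := hcmem (g^[m - 1] i₁)
        rwa [hmm] at this
      obtain ⟨Wk, hWk⟩ := seg i₁.1 (c (g^[m - 1] i₁)) (z i₁) hc1 (hzmem i₁)
      refine ⟨Wk, ?_⟩
      intro hmemE
      have := hWk _ hmemE (c i₁) (by simp)
      exact hdisj' (hgne i₁) (hcmem i₁) this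
    | succ d ih =>
      intro hd1
      have hd : d ≤ m - 1 := by omega
      set j' : D := g^[m - 1 - (d + 1)] i₁ with hj'
      set j'' : D := g^[m - 1 - d] i₁ with hj''
      obtain ⟨Wk, hWk⟩ := ih hd
      have hgj' : g j' = j'' := by
        have h2 : g^[(m - 1 - (d + 1)) + 1] i₁ = g (g^[m - 1 - (d + 1)] i₁) :=
          Function.iterate_succ_apply' g (m - 1 - (d + 1)) i₁
        rw [hj', ← h2, hj'']
        congr 1
        omega
      have hj''ne : j''.1 ≠ i₁.1 := by
        intro hval
        exact hmmin (m - 1 - d) (by omega) (by omega) (Subtype.ext hval)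
      have hcj' : c j' ∈ parts j''.1 := by rw [← hgj']; exact hcmem j'
      obtain ⟨Wseg, hWseg⟩ := seg j''.1 (c j') (z j'') hcj' (hzmem j'')
      refine ⟨Wseg.append (Walk.cons (hcadj j'') Wk), ?_⟩
      rw [Walk.edges_append, List.mem_append, Walk.edges_cons, List.mem_cons]
      rintro (hseg | hhd | htl)
      · have hz1 := hWseg _ hseg (z i₁) (by simp)
        exact hdisj' (Ne.symm hj''ne) (hzmem i₁) hz1
      · rw [Sym2.eq_iff] at hhd
        rcases hhd with ⟨h1, _⟩ | ⟨h1, _⟩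
        · exact hdisj' (Ne.symm hj''ne) (h1 ▸ hzmem i₁) (hzmem j'')
        · exact hcC j'' (h1 ▸ hzC i₁)
      · exact hWk htl
  obtain ⟨Wk, hWk⟩ := hchain (m - 1) le_rfl
  have e1 : g^[m - 1 - (m - 1)] i₁ = i₁ := by rw [Nat.sub_self]; rfl
  let Wk2 := Wk.copy (by rw [e1]) rfl
  have hWk2 : s(z i₁, c i₁) ∉ Wk2.edges := by
    rw [Walk.edges_copy]; exact hWk
  have hznec : z i₁ ≠ c i₁ := fun h => hcC i₁ (h ▸ hzC i₁)
  let p1 : H.Walk (z i₁) (c i₁) := Walk.cons (hcadj i₁) Walk.nil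
  have hp1 : p1.IsPath := by
    simp [p1, Walk.cons_isPath_iff, hznec]
  let p2 : H.Walk (z i₁) (c i₁) := Wk2.reverse.bypass
  have hp2 : p2.IsPath := Walk.bypass_isPath _
  have hne2 : s(z i₁, c i₁) ∉ p2.edges := by
    intro hmem
    have := Walk.edges_bypass_subset _ hmem
    rw [Walk.edges_reverse, List.mem_reverse] at this
    exact hWk2 this
  have hpq := isAcyclic_iff_path_unique.mp hac ⟨p1, hp1⟩ ⟨p2, hp2⟩
  have hedge : s(z i₁, c i₁) ∈ p1.edges := by simp [p1]
  have hpp : p1 = p2 := congrArg Subtype.val hpq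
  rw [hpp] at hedge
  exact hne2 hedge


lemma singleton_cover {U : Type*} [Fintype U] (H : SimpleGraph U) :
    IsPathCoverOn H Set.univ (Fintype.card U) := by
  classical
  let e := (Fintype.equivFin U).symm
  refine ⟨fun i => {e i}, fun i => ⟨e i, rfl⟩, ?_, ?_, ?_⟩
  · intro i j hij
    exact Set.disjoint_singleton.mpr (fun h => hij (e.injective h))
  · ext x
    simp only [Set.mem_iUnion, Set.mem_singleton_iff, Set.mem_univ, iff_true]
    exact ⟨e.symm x, by simp [e]⟩
  · intro i
    refine ⟨1, ⟨RelIso.mk (Equiv.ofUnique _ _) ?_⟩⟩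
    intro a b
    have hab : a = b := Subsingleton.elim a b
    subst hab
    exact iff_of_false (pathGraph 1).irrefl ((H.induce _).irrefl)

theorem maxNullity_le_Tplus' {V : Type*} [Fintype V] [DecidableEq V]
    (G : SimpleGraph V) :
    maxNullity G ≤ Tplus G := by
  classical
  apply le_csInf
  · refine ⟨pathCoverNumber (G.induce ((↑(Finset.univ : Finset V) : Set V)ᶜ)) +
      (Finset.univ : Finset V).card, Finset.univ, ?_, rfl⟩
    intro v
    exact absurd v.2 (by simp)
  · rintro k ⟨S, hacyc, rfl⟩
    set s : Set V := (↑S : Set V)ᶜ with hs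
    set H := G.induce s with hH
    have hPCne : {pp | IsPathCoverOn H Set.univ pp}.Nonempty :=
      ⟨Fintype.card ↥s, singleton_cover H⟩
    have hmem : IsPathCoverOn H Set.univ (pathCoverNumber H) := Nat.sInf_mem hPCne
    obtain ⟨B', hB'zf, hB'card⟩ := forest_cover_zfs H hacyc hmem
    have hlift := zfs_lift G s _ hB'zf
    have hsc : sᶜ = (↑S : Set V) := compl_compl _
    set BG : Finset V := B'.image Subtype.val ∪ S with hBG
    have hBGcoe : (↑BG : Set V) = Subtype.val '' ((B' : Finset ↥s) : Set ↥s) ∪ sᶜ := by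
      rw [hBG]
      simp [hsc]
    have hzfBG : IsZeroForcingSet G ↑BG := by rw [hBGcoe]; exact hlift
    have hcard : BG.card ≤ pathCoverNumber H + S.card := by
      calc BG.card ≤ (B'.image Subtype.val).card + S.card := Finset.card_union_le _ _
        _ ≤ B'.card + S.card := by gcongr; exact Finset.card_image_le
        _ ≤ pathCoverNumber H + S.card := by gcongr
    apply csSup_le'
    rintro kk ⟨A, hA, rfl⟩
    exact le_trans (nullity_le_card_zfs hA BG hzfBG) hcard


theorem maxNullity_le_Tplus {V : Type*} [Fintype V] [DecidableEq V]
    (G : SimpleGraph V) :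
    maxNullity G ≤ Tplus G := by
  exact maxNullity_le_Tplus' G
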